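/- Let A be a commutative unital Banach algebra, and let x, y ∈ A be quasinilpotent elements. If λ ∈ ℂ with λ ∉ πℤ and cos(λ·1_A + x) = cos(λ·1_A + y), then x = y. -/

import Mathlib

/-- The cosine of an element of a complex Banach algebra, defined by the usual power
series `cos x = ∑ (-1)^n x^(2n) / (2n)!`. -/
noncomputable def algCos {A : Type*} [NormedRing A] [NormedAlgebra ℂ A] [CompleteSpace A]
    (x : A) : A :=
  ∑' n : ℕ, (((-1 : ℂ) ^ n / ((2 * n).factorial : ℂ))) • x ^ (2 * n)

open NormedSpace Complex
open scoped ENNReal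

set_option linter.unusedSectionVars false

section Aux

variable {A : Type*} [NormedCommRing A] [NormedAlgebra ℂ A] [CompleteSpace A]

-- characters kill quasinilpotents
lemma char_eq_zero {x : A} (hx : spectralRadius ℂ x = 0)
    (φ : WeakDual.characterSpace ℂ A) : φ x = 0 := by
  have h1 : φ x ∈ spectrum ℂ x := AlgHom.apply_mem_spectrum φ x
  have h2 : (‖φ x‖₊ : ℝ≥0∞) ≤ spectralRadius ℂ x :=
    le_iSup₂ (f := fun k (_ : k ∈ spectrum ℂ x) => (‖k‖₊ : ℝ≥0∞)) (φ x) h1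
  rw [hx, nonpos_iff_eq_zero, ENNReal.coe_eq_zero, nnnorm_eq_zero] at h2
  exact h2

lemma isUnit_of_char {u : A} (h : ∀ φ : WeakDual.characterSpace ℂ A, φ u ≠ 0) :
    IsUnit u := by
  by_contra hu
  obtain ⟨φ, hφ⟩ := WeakDual.CharacterSpace.exists_apply_eq_zero hu
  exact h φ hφ

set_option linter.unusedSectionVars false

lemma two_smul_algCos (x : A) :
    NormedSpace.exp (I • x) + NormedSpace.exp (-(I • x)) = (2 : ℂ) • algCos x := by
  have hsum1 := expSeries_summable' (𝕂 := ℂ) (I • x)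
  have hsum2 := expSeries_summable' (𝕂 := ℂ) (-(I • x))
  rw [NormedSpace.exp_eq_tsum ℂ]
  beta_reduce
  rw [← Summable.tsum_add hsum1 hsum2]
  set f : ℕ → A := fun n => ((n.factorial : ℂ))⁻¹ • (I • x) ^ n
      + ((n.factorial : ℂ))⁻¹ • (-(I • x)) ^ n with hf
  have hfval : ∀ n, f n = ((I ^ n + (-I) ^ n) * ((n.factorial : ℂ))⁻¹) • x ^ n := by
    intro n
    rw [hf]
    have hneg : -(I • x) = (-I) • x := (neg_smul I x).symm
    simp only [hneg]
    rw [smul_pow, smul_pow, smul_smul, smul_smul, ← add_smul]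
    ring_nf
  have hfsum : Summable f := hsum1.add hsum2
  have hodd : ∀ k, f (2 * k + 1) = 0 := by
    intro k
    rw [hfval]
    have : (-I) ^ (2 * k + 1) = -(I ^ (2 * k + 1)) := by
      rw [neg_pow]
      simp [pow_succ, pow_mul]
    rw [this, add_neg_cancel, zero_mul, zero_smul]
  have heven : ∀ k, f (2 * k) = (2 : ℂ) • (((-1 : ℂ) ^ k / (((2 * k).factorial : ℂ))) • x ^ (2 * k)) := by
    intro k
    rw [hfval]
    have h1 : (I : ℂ) ^ (2 * k) = (-1 : ℂ) ^ k := by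
      rw [pow_mul, I_sq]
    have h2 : (-I : ℂ) ^ (2 * k) = (-1 : ℂ) ^ k := by
      rw [neg_pow, pow_mul, neg_one_sq, one_pow, one_mul, h1]
    rw [h1, h2, smul_smul]
    congr 1
    ring
  rw [← tsum_even_add_odd (hfsum.comp_injective fun a b => by omega)
      (hfsum.comp_injective fun a b => by omega)]
  have : ∑' k, f (2 * k + 1) = 0 := by
    simp only [hodd]; exact tsum_zero
  rw [this, add_zero]
  simp only [heven]
  rw [algCos, tsum_const_smul'' (2 : ℂ)]

lemma eq_zero_of_exp_eq_one {z : A} (hz : ∀ φ : WeakDual.characterSpace ℂ A, φ z = 0)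
    (hez : NormedSpace.exp z = 1) : z = 0 := by
  set g : A := ∑' n : ℕ, (((n + 1).factorial : ℂ))⁻¹ • z ^ n with hgdef
  have hgsum : Summable fun n : ℕ => (((n + 1).factorial : ℂ))⁻¹ • z ^ n := by
    apply Summable.of_norm
    refine Summable.of_nonneg_of_le (fun n => norm_nonneg _) ?_
      (norm_expSeries_summable' (𝕂 := ℂ) z)
    intro n
    rw [norm_smul, norm_smul]
    gcongr
    rw [norm_inv, norm_inv, Complex.norm_natCast, Complex.norm_natCast]
    gcongr
    exact Nat.le_succ n
  have hkey : NormedSpace.exp z = 1 + z * g := by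
    rw [NormedSpace.exp_eq_tsum ℂ]
    beta_reduce
    rw [Summable.tsum_eq_zero_add (expSeries_summable' (𝕂 := ℂ) z)]
    congr 1
    · simp
    · rw [hgdef, ← hgsum.tsum_mul_left z]
      congr 1
      ext n
      rw [mul_smul_comm, ← pow_succ']
  have hzg : z * g = 0 := by
    rw [hez] at hkey
    have := hkey.symm
    rwa [add_eq_left] at this
  have hgu : IsUnit g := by
    apply isUnit_of_char
    intro φ
    have hmap := ((hgsum.hasSum.map φ (map_continuous φ)).tsum_eq).symm
    have hterm : ∀ n : ℕ, φ ((((n + 1).factorial : ℂ))⁻¹ • z ^ n)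
        = (((n + 1).factorial : ℂ))⁻¹ * (0 : ℂ) ^ n := by
      intro n
      rw [map_smul, map_pow, hz φ, smul_eq_mul]
    rw [hgdef, hmap]
    have : (∑' n : ℕ, φ ((((n + 1).factorial : ℂ))⁻¹ • z ^ n)) = 1 := by
      rw [tsum_eq_single 0]
      · simp [hterm 0]
      · intro n hn
        rw [hterm n, zero_pow hn, mul_zero]
    simp only [Function.comp] at this ⊢
    rw [this]
    exact one_ne_zero
  have : g * z = g * 0 := by rw [mul_zero, mul_comm, hzg]
  exact hgu.mul_left_cancel this

end Aux

theorem stmt_6 {A : Type*} [NormedCommRing A] [NormedAlgebra ℂ A] [CompleteSpace A]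
    (x y : A) (hx : spectralRadius ℂ x = 0) (hy : spectralRadius ℂ y = 0)
    (l : ℂ) (hl : ∀ k : ℤ, l ≠ (Real.pi : ℂ) * k)
    (h : algCos (algebraMap ℂ A l + x) = algCos (algebraMap ℂ A l + y)) :
    x = y := by
  letI : NormedAlgebra ℚ A := NormedAlgebra.restrictScalars ℚ ℂ A
  set m : A := algebraMap ℂ A (I * l) with hm
  have hsplit : ∀ a : A, I • (algebraMap ℂ A l + a) = m + I • a := by
    intro a
    rw [smul_add, hm]
    congr 1
    rw [Algebra.algebraMap_eq_smul_one, Algebra.algebraMap_eq_smul_one, smul_smul]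
  set c := NormedSpace.exp m with hc
  set c' := NormedSpace.exp (-m) with hc'
  set u := NormedSpace.exp (I • x) with hu
  set u' := NormedSpace.exp (-(I • x)) with hu'
  set v := NormedSpace.exp (I • y) with hv
  set v' := NormedSpace.exp (-(I • y)) with hv'
  have hcc : c * c' = 1 := by
    rw [hc, hc', ← NormedSpace.exp_add, add_neg_cancel, NormedSpace.exp_zero]
  have huu : u * u' = 1 := by
    rw [hu, hu', ← NormedSpace.exp_add, add_neg_cancel, NormedSpace.exp_zero]
  have hvv : v * v' = 1 := by
    rw [hv, hv', ← NormedSpace.exp_add, add_neg_cancel, NormedSpace.exp_zero]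
  have E3 : c * u + c' * u' = c * v + c' * v' := by
    have E2 : NormedSpace.exp (I • (algebraMap ℂ A l + x)) + NormedSpace.exp (-(I • (algebraMap ℂ A l + x)))
        = NormedSpace.exp (I • (algebraMap ℂ A l + y)) + NormedSpace.exp (-(I • (algebraMap ℂ A l + y))) := by
      rw [two_smul_algCos, two_smul_algCos, h]
    rwa [hsplit x, hsplit y, neg_add, neg_add, NormedSpace.exp_add, NormedSpace.exp_add,
      NormedSpace.exp_add, NormedSpace.exp_add] at E2
  have key : (c * c * (u * v) - 1) * (u - v) = 0 := by
    linear_combination (c * u * v) * E3 + u * (v * v') * hcc + u * hvv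
      - v * (u * u') * hcc - v * huu
  -- the factor is invertible
  have hwu : IsUnit (c * c * (u * v) - 1) := by
    apply isUnit_of_char
    intro φ
    have hφc : φ c = Complex.exp (I * l) := by
      rw [hc, NormedSpace.map_exp φ (map_continuous φ) m, hm, AlgHomClass.commutes,
        Complex.exp_eq_exp_ℂ]
      simp
    have hφu : φ u = 1 := by
      rw [hu, NormedSpace.map_exp φ (map_continuous φ) _, map_smul, char_eq_zero hx φ, smul_zero,
        NormedSpace.exp_zero]
    have hφv : φ v = 1 := by
      rw [hv, NormedSpace.map_exp φ (map_continuous φ) _, map_smul, char_eq_zero hy φ, smul_zero,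
        NormedSpace.exp_zero]
    have : φ (c * c * (u * v) - 1) = Complex.exp (I * l + I * l) - 1 := by
      rw [map_sub, map_mul, map_mul, map_mul, map_one, hφc, hφu, hφv, mul_one, mul_one,
        Complex.exp_add]
    rw [this, sub_ne_zero]
    intro hcontra
    obtain ⟨n, hn⟩ := Complex.exp_eq_one_iff.mp hcontra
    apply hl n
    have h2 : (2 : ℂ) * I ≠ 0 := by
      simp [Complex.I_ne_zero]
    apply mul_left_cancel₀ h2
    rw [show (2 : ℂ) * I * l = I * l + I * l by ring, hn]
    push_cast
    ring
  have huv : u = v := by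
    have := hwu.mul_left_cancel (a := c * c * (u * v) - 1) (b := u - v) (c := 0)
      (by rw [key, mul_zero])
    rwa [sub_eq_zero] at this
  have hz : I • (x - y) = 0 := by
    apply eq_zero_of_exp_eq_one
    · intro φ
      rw [map_smul, map_sub, char_eq_zero hx φ, char_eq_zero hy φ, sub_zero, smul_zero]
    · have : I • (x - y) = I • x + -(I • y) := by rw [smul_sub]; ring
      rw [this, NormedSpace.exp_add, ← hu, ← hv', huv, hvv]
  rcases smul_eq_zero.mp hz with h1 | h2
  · exact absurd h1 Complex.I_ne_zero
  · exact sub_eq_zero.mp h2
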